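/- Let ε be a real random variable, independent of X, with Lebesgue density f bounded by a constant C, let Z = (X, 1)^T, and suppose E‖Z‖ < ∞. Then for every r > 0 and every δ > 0, P{r − δ ≤ |ε|/‖Z‖ ≤ r + δ} ≤ 4Cδ E‖Z‖. -/
import Mathlib

open MeasureTheory ProbabilityTheory

/-- If `ε` is independent of `X` with Lebesgue density `f` bounded by `C`, and
`Z = (X, 1)ᵀ` satisfies `E‖Z‖ < ∞`, then for every `r > 0` and `δ > 0`,
`P{r − δ ≤ |ε|/‖Z‖ ≤ r + δ} ≤ 4Cδ E‖Z‖`. -/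
theorem hough_envelope_bound
    {Ω : Type*} [MeasureSpace Ω] [IsProbabilityMeasure (ℙ : Measure Ω)]
    (X ε : Ω → ℝ) (hmX : Measurable X) (hmε : Measurable ε)
    (hindep : IndepFun X ε ℙ)
    (f : ℝ → ℝ) (C : ℝ)
    (hdens : Measure.map ε ℙ = volume.withDensity (fun x => ENNReal.ofReal (f x)))
    (hnn : ∀ x, 0 ≤ f x)
    (hC : ∀ x, f x ≤ C)
    (hZ : Integrable (fun ω => Real.sqrt (X ω ^ 2 + 1)) ℙ)
    (r δ : ℝ) (hr : 0 < r) (hδ : 0 < δ) :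
    (ℙ {ω | r - δ ≤ |ε ω| / Real.sqrt (X ω ^ 2 + 1) ∧
        |ε ω| / Real.sqrt (X ω ^ 2 + 1) ≤ r + δ}).toReal
      ≤ 4 * C * δ * ∫ ω, Real.sqrt (X ω ^ 2 + 1) ∂ℙ := by
  have hgpos : ∀ x : ℝ, 0 < Real.sqrt (x ^ 2 + 1) := fun x =>
    Real.sqrt_pos.2 (by positivity)
  have hgnn : ∀ x : ℝ, 0 ≤ Real.sqrt (x ^ 2 + 1) := fun x => (hgpos x).le
  have hC0 : 0 ≤ C := le_trans (hnn 0) (hC 0)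
  have hgm : Measurable fun x : ℝ => Real.sqrt (x ^ 2 + 1) := by
    exact (Real.continuous_sqrt.comp (by continuity)).measurable
  -- the target set in the product space
  set S : Set (ℝ × ℝ) := {p | (r - δ) * Real.sqrt (p.1 ^ 2 + 1) ≤ |p.2| ∧
      |p.2| ≤ (r + δ) * Real.sqrt (p.1 ^ 2 + 1)} with hS
  have hSm : MeasurableSet S := by
    apply MeasurableSet.inter
    · exact measurableSet_le ((measurable_const.mul (hgm.comp measurable_fst)))
        (measurable_snd.abs)
    · exact measurableSet_le measurable_snd.abs
        ((measurable_const.mul (hgm.comp measurable_fst)))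
  have hset : {ω | r - δ ≤ |ε ω| / Real.sqrt (X ω ^ 2 + 1) ∧
      |ε ω| / Real.sqrt (X ω ^ 2 + 1) ≤ r + δ} = (fun ω => (X ω, ε ω)) ⁻¹' S := by
    ext ω
    simp only [Set.mem_setOf_eq, Set.mem_preimage, hS]
    rw [le_div_iff₀ (hgpos (X ω)), div_le_iff₀ (hgpos (X ω))]
  have hjoint : Measure.map (fun ω => (X ω, ε ω)) ℙ
      = (Measure.map X ℙ).prod (Measure.map ε ℙ) :=
    (indepFun_iff_map_prod_eq_prod_map_map hmX.aemeasurable hmε.aemeasurable).mp hindep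
  have hmeas : ℙ {ω | r - δ ≤ |ε ω| / Real.sqrt (X ω ^ 2 + 1) ∧
      |ε ω| / Real.sqrt (X ω ^ 2 + 1) ≤ r + δ}
      = ((Measure.map X ℙ).prod (Measure.map ε ℙ)) S := by
    rw [hset, ← Measure.map_apply (hmX.prodMk hmε) hSm, hjoint]
  -- slice bound
  have hslice : ∀ x : ℝ, (Measure.map ε ℙ) {e : ℝ |
      (r - δ) * Real.sqrt (x ^ 2 + 1) ≤ |e| ∧ |e| ≤ (r + δ) * Real.sqrt (x ^ 2 + 1)}
      ≤ ENNReal.ofReal (C * (4 * δ * Real.sqrt (x ^ 2 + 1))) := by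
    intro x
    set g := Real.sqrt (x ^ 2 + 1) with hgdef
    set a := max ((r - δ) * g) 0 with ha
    set b := (r + δ) * g with hb
    have hab : b - a ≤ 2 * δ * g := by
      rcases le_or_gt 0 ((r - δ) * g) with h | h
      · rw [ha, max_eq_left h, hb]; nlinarith [hgpos x]
      · rw [ha, max_eq_right h.le, hb]
        have : r < δ := by nlinarith [hgpos x]
        nlinarith [hgpos x]
    have hA : {e : ℝ | (r - δ) * g ≤ |e| ∧ |e| ≤ b} ⊆
        Set.Icc (-b) (-a) ∪ Set.Icc a b := by
      intro e ⟨h1, h2⟩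
      have hae : a ≤ |e| := max_le h1 (abs_nonneg e)
      rcases le_or_gt 0 e with he | he
      · right
        rw [abs_of_nonneg he] at hae h2
        exact ⟨hae, h2⟩
      · left
        rw [abs_of_neg he] at hae h2
        exact ⟨by linarith, by linarith⟩
    have hAm : MeasurableSet {e : ℝ | (r - δ) * g ≤ |e| ∧ |e| ≤ b} :=
      (measurableSet_le measurable_const measurable_abs).inter
        (measurableSet_le measurable_abs measurable_const)
    calc (Measure.map ε ℙ) {e : ℝ | (r - δ) * g ≤ |e| ∧ |e| ≤ b}
        = ∫⁻ e in {e : ℝ | (r - δ) * g ≤ |e| ∧ |e| ≤ b}, ENNReal.ofReal (f e) := by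
          rw [hdens, withDensity_apply _ hAm]
      _ ≤ ∫⁻ _ in {e : ℝ | (r - δ) * g ≤ |e| ∧ |e| ≤ b}, ENNReal.ofReal C := by
          exact lintegral_mono fun e => ENNReal.ofReal_le_ofReal (hC e)
      _ = ENNReal.ofReal C * volume {e : ℝ | (r - δ) * g ≤ |e| ∧ |e| ≤ b} := by
          rw [lintegral_const, Measure.restrict_apply_univ]
      _ ≤ ENNReal.ofReal C * ENNReal.ofReal (4 * δ * g) := by
          gcongr
          calc volume {e : ℝ | (r - δ) * g ≤ |e| ∧ |e| ≤ b}
              ≤ volume (Set.Icc (-b) (-a) ∪ Set.Icc a b) := measure_mono hA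
            _ ≤ volume (Set.Icc (-b) (-a)) + volume (Set.Icc a b) := measure_union_le _ _
            _ = ENNReal.ofReal (b - a) + ENNReal.ofReal (b - a) := by
                rw [Real.volume_Icc, Real.volume_Icc]; ring_nf
            _ ≤ ENNReal.ofReal (2 * δ * g) + ENNReal.ofReal (2 * δ * g) := by
                gcongr <;> exact hab
            _ = ENNReal.ofReal (4 * δ * g) := by
                rw [← ENNReal.ofReal_add (by positivity) (by positivity)]; ring_nf
      _ = ENNReal.ofReal (C * (4 * δ * g)) := by
          rw [← ENNReal.ofReal_mul hC0]
  -- put it together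
  have hprod : ((Measure.map X ℙ).prod (Measure.map ε ℙ)) S
      ≤ ENNReal.ofReal (4 * C * δ) * ENNReal.ofReal (∫ ω, Real.sqrt (X ω ^ 2 + 1) ∂ℙ) := by
    rw [Measure.prod_apply hSm]
    have hsliceq : ∀ x : ℝ, (Prod.mk x ⁻¹' S) = {e : ℝ |
        (r - δ) * Real.sqrt (x ^ 2 + 1) ≤ |e| ∧ |e| ≤ (r + δ) * Real.sqrt (x ^ 2 + 1)} := by
      intro x; rfl
    calc ∫⁻ x, (Measure.map ε ℙ) (Prod.mk x ⁻¹' S) ∂(Measure.map X ℙ)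
        ≤ ∫⁻ x, ENNReal.ofReal (C * (4 * δ * Real.sqrt (x ^ 2 + 1))) ∂(Measure.map X ℙ) := by
          refine lintegral_mono fun x => ?_
          rw [hsliceq x]; exact hslice x
      _ = ∫⁻ x, ENNReal.ofReal (4 * C * δ) * ENNReal.ofReal (Real.sqrt (x ^ 2 + 1))
            ∂(Measure.map X ℙ) := by
          congr 1; ext x
          rw [← ENNReal.ofReal_mul (by positivity)]
          ring_nf
      _ = ENNReal.ofReal (4 * C * δ) *
            ∫⁻ x, ENNReal.ofReal (Real.sqrt (x ^ 2 + 1)) ∂(Measure.map X ℙ) := by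
          rw [lintegral_const_mul _ (by exact (ENNReal.measurable_ofReal.comp hgm))]
      _ = ENNReal.ofReal (4 * C * δ) *
            ∫⁻ ω, ENNReal.ofReal (Real.sqrt (X ω ^ 2 + 1)) ∂ℙ := by
          congr 1
          exact lintegral_map hgm.ennreal_ofReal hmX
      _ = ENNReal.ofReal (4 * C * δ) * ENNReal.ofReal (∫ ω, Real.sqrt (X ω ^ 2 + 1) ∂ℙ) := by
          rw [← ofReal_integral_eq_lintegral_ofReal hZ (Filter.Eventually.of_forall fun ω => hgnn (X ω))]
  have hint : 0 ≤ ∫ ω, Real.sqrt (X ω ^ 2 + 1) ∂ℙ :=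
    integral_nonneg fun ω => hgnn (X ω)
  refine ENNReal.toReal_le_of_le_ofReal (by positivity) ?_
  rw [hmeas]
  calc ((Measure.map X ℙ).prod (Measure.map ε ℙ)) S
      ≤ ENNReal.ofReal (4 * C * δ) * ENNReal.ofReal (∫ ω, Real.sqrt (X ω ^ 2 + 1) ∂ℙ) := hprod
    _ = ENNReal.ofReal (4 * C * δ * ∫ ω, Real.sqrt (X ω ^ 2 + 1) ∂ℙ) := by
        rw [← ENNReal.ofReal_mul (by positivity)]
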